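/- Let γ: [α, β] → ℝ² be a continuous curve and T: ℝ² → ℝ² a C¹ map whose first coordinate T_φ satisfies |∂T_φ/∂φ| < b and ∂T_φ/∂I ≥ K > 0 everywhere. If sup_{t,s ∈ [α,β]} |p₁(γ(t)) − p₁(γ(s))| < 1 and |p₂(γ(β)) − p₂(γ(α))| > (2+b)/K, then sup_{t,s ∈ [α,β]} |p₁(T∘γ(t)) − p₁(T∘γ(s))| ≥ 2; consequently, for every φ₀ ∈ ℝ there exists s ∈ ℤ with φ₀ + s ∈ p₁(T∘γ([α,β])). -/
import Mathlib


open Set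

/-- Claim 1: a curve with small horizontal extent and large vertical extent is
stretched horizontally by a twist map, so its image crosses an integer
translate of any vertical line. -/
theorem twist_stretches_curve
    (T : ℝ × ℝ → ℝ × ℝ) (hT : Continuous T)
    (L : ℝ × ℝ → (ℝ × ℝ →L[ℝ] ℝ))
    (hdiff : ∀ p : ℝ × ℝ, HasFDerivAt (fun q : ℝ × ℝ => (T q).1) (L p) p)
    (b K : ℝ) (hK : 0 < K)
    (hb : ∀ p : ℝ × ℝ, |L p (1, 0)| < b)
    (htwist : ∀ p : ℝ × ℝ, K ≤ L p (0, 1))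
    (α β : ℝ) (hαβ : α ≤ β)
    (γ : ℝ → ℝ × ℝ) (hγ : ContinuousOn γ (Icc α β))
    (hosc : ∀ t ∈ Icc α β, ∀ s ∈ Icc α β, |(γ t).1 - (γ s).1| < 1)
    (hvert : |(γ β).2 - (γ α).2| > (2 + b) / K) :
    (∃ t ∈ Icc α β, ∃ s ∈ Icc α β, |(T (γ t)).1 - (T (γ s)).1| ≥ 2) ∧
    ∀ φ₀ : ℝ, ∃ s : ℤ, φ₀ + (s : ℝ) ∈ (fun t => (T (γ t)).1) '' Icc α β := by
  have hmem_a : α ∈ Icc α β := ⟨le_refl _, hαβ⟩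
  have hmem_b : β ∈ Icc α β := ⟨hαβ, le_refl _⟩
  set A := γ α with hA
  set B := γ β with hB
  set path : ℝ → ℝ × ℝ := fun u => A + u • (B - A) with hpath
  have hpd : ∀ u : ℝ, HasDerivAt path (B - A) u := by
    intro u
    have h1 : HasDerivAt (fun u : ℝ => u • (B - A)) (B - A) u := by
      simpa using (hasDerivAt_id u).smul_const (B - A)
    simpa [hpath] using h1.const_add A
  have hgd : ∀ u : ℝ, HasDerivAt (fun u => (T (path u)).1) (L (path u) (B - A)) u :=
    fun u => (hdiff (path u)).comp_hasDerivAt u (hpd u)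
  obtain ⟨c, hc, hceq⟩ := exists_hasDerivAt_eq_slope (fun u => (T (path u)).1)
    (fun u => L (path u) (B - A)) one_pos
    (fun u _ => (hgd u).continuousAt.continuousWithinAt)
    (fun u _ => hgd u)
  have h0 : path 0 = A := by simp [hpath]
  have h1 : path 1 = B := by simp [hpath]
  have hslope : L (path c) (B - A) = (T B).1 - (T A).1 := by
    rw [hceq]; rw [h0, h1]; simp
  have hdecomp : L (path c) (B - A)
      = (B.1 - A.1) * L (path c) (1, 0) + (B.2 - A.2) * L (path c) (0, 1) := by
    have hv : (B - A : ℝ × ℝ)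
        = (B.1 - A.1) • ((1 : ℝ), (0 : ℝ)) + (B.2 - A.2) • ((0 : ℝ), (1 : ℝ)) := by
      ext <;> simp
    rw [hv, map_add, map_smul, map_smul]; simp
  have hb0 : (0 : ℝ) < b := lt_of_le_of_lt (abs_nonneg _) (hb A)
  set x := B.1 - A.1 with hx'
  set y := B.2 - A.2 with hy'
  set a1 := L (path c) (1, 0) with ha1'
  set a2 := L (path c) (0, 1) with ha2'
  have hx : |x| < 1 := hosc β hmem_b α hmem_a
  have hy : |y| > (2 + b) / K := hvert
  have ha2K : K ≤ a2 := htwist _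
  have h2 : |y * a2| > 2 + b := by
    rw [abs_mul]
    have ha2 : K ≤ |a2| := le_trans ha2K (le_abs_self _)
    calc 2 + b = ((2 + b) / K) * K := by field_simp
      _ < |y| * K := mul_lt_mul_of_pos_right hy hK
      _ ≤ |y| * |a2| := mul_le_mul_of_nonneg_left ha2 (abs_nonneg y)
  have h1b : |x * a1| < b := by
    rw [abs_mul]
    calc |x| * |a1| ≤ 1 * |a1| := mul_le_mul_of_nonneg_right hx.le (abs_nonneg a1)
      _ = |a1| := one_mul _
      _ < b := hb _
  have htri : |y * a2| ≤ |x * a1 + y * a2| + |x * a1| := by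
    have h := abs_add_le (x * a1 + y * a2) (-(x * a1))
    have he : (x * a1 + y * a2) + (-(x * a1)) = y * a2 := by ring
    rw [he, abs_neg] at h
    exact h
  have key : |(T B).1 - (T A).1| ≥ 2 := by
    rw [← hslope, hdecomp]
    linarith
  refine ⟨⟨β, hmem_b, α, hmem_a, key⟩, ?_⟩
  set f : ℝ → ℝ := fun t => (T (γ t)).1 with hf'
  have hf : ContinuousOn f (Icc α β) :=
    (continuous_fst.comp hT).comp_continuousOn hγ
  have main : ∀ u v : ℝ, u ∈ Icc α β → v ∈ Icc α β → f v - f u ≥ 2 →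
      ∀ φ₀ : ℝ, ∃ s : ℤ, φ₀ + (s : ℝ) ∈ f '' Icc α β := by
    intro u v hu hv huv φ₀
    refine ⟨⌈f u - φ₀⌉, ?_⟩
    apply isPreconnected_Icc.intermediate_value hu hv hf
    constructor
    · have := Int.le_ceil (f u - φ₀)
      linarith
    · have := Int.ceil_lt_add_one (f u - φ₀)
      linarith
  rcases le_abs.mp key with h | h
  · exact main α β hmem_a hmem_b (by dsimp [f]; linarith)
  · exact main β α hmem_b hmem_a (by dsimp [f]; linarith)
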